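/- Let A ∈ ℝ^{p×n}, Q ∈ ℝ^{n×n}, L ≥ 0, σ_A > 0 and φ_max ≥ 0 be such that σ_A‖z‖² ≤ ‖Aᵀz‖² for all z ∈ ℝᵖ and ‖Qw‖ ≤ φ_max‖w‖ for all w ∈ ℝⁿ. Let G : ℝⁿ → ℝⁿ be L-Lipschitz. Suppose x′, x, x₊ ∈ ℝⁿ, v′, v ∈ ℝⁿ, λ, λ₊ ∈ ℝᵖ and η, η′ > 0 satisfy the stationarity relations Aᵀλ₊ = v − ηQ(x − x₊) and Aᵀλ = v′ − η′Q(x′ − x). Then ‖λ₊ − λ‖² ≤ (5/σ_A)·[ ‖v − G(x)‖² + ‖v′ − G(x′)‖² + η²φ_max²‖x − x₊‖² + (L² + η′²φ_max²)‖x′ − x‖² ]. -/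
import Mathlib


open Matrix

/-- The action of a real matrix on Euclidean space. -/
noncomputable def mvec {m n : ℕ} (A : Matrix (Fin m) (Fin n) ℝ)
    (x : EuclideanSpace ℝ (Fin n)) : EuclideanSpace ℝ (Fin m) :=
  (WithLp.equiv 2 (Fin m → ℝ)).symm (A.mulVec ((WithLp.equiv 2 (Fin n → ℝ)) x))

lemma five_sq (a b c d e : ℝ) :
    (a + b + c + d + e) ^ 2 ≤ 5 * (a ^ 2 + b ^ 2 + c ^ 2 + d ^ 2 + e ^ 2) := by
  nlinarith [sq_nonneg (a-b), sq_nonneg (a-c), sq_nonneg (a-d), sq_nonneg (a-e),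
    sq_nonneg (b-c), sq_nonneg (b-d), sq_nonneg (b-e), sq_nonneg (c-d),
    sq_nonneg (c-e), sq_nonneg (d-e)]

lemma mvec_sub {m n : ℕ} (A : Matrix (Fin m) (Fin n) ℝ)
    (y z : EuclideanSpace ℝ (Fin n)) : mvec A (y - z) = mvec A y - mvec A z := by
  simp [mvec, Matrix.mulVec_sub]

theorem stmt_3 {p n : ℕ} (A : Matrix (Fin p) (Fin n) ℝ) (Q : Matrix (Fin n) (Fin n) ℝ)
    (L σA φmax : ℝ) (hL : 0 ≤ L) (hσA : 0 < σA) (hφ : 0 ≤ φmax)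
    (hA : ∀ z : EuclideanSpace ℝ (Fin p), σA * ‖z‖ ^ 2 ≤ ‖mvec Aᵀ z‖ ^ 2)
    (hQ : ∀ w : EuclideanSpace ℝ (Fin n), ‖mvec Q w‖ ≤ φmax * ‖w‖)
    (G : EuclideanSpace ℝ (Fin n) → EuclideanSpace ℝ (Fin n))
    (hG : ∀ x x', ‖G x - G x'‖ ≤ L * ‖x - x'‖)
    (x' x xp v' v : EuclideanSpace ℝ (Fin n)) (lam lamp : EuclideanSpace ℝ (Fin p))
    (η η' : ℝ) (hη : 0 < η) (hη' : 0 < η')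
    (h1 : mvec Aᵀ lamp = v - η • mvec Q (x - xp))
    (h2 : mvec Aᵀ lam = v' - η' • mvec Q (x' - x)) :
    ‖lamp - lam‖ ^ 2 ≤ (5 / σA) *
      (‖v - G x‖ ^ 2 + ‖v' - G x'‖ ^ 2 + η ^ 2 * φmax ^ 2 * ‖x - xp‖ ^ 2 +
        (L ^ 2 + η' ^ 2 * φmax ^ 2) * ‖x' - x‖ ^ 2) := by
  have key : mvec Aᵀ (lamp - lam) =
      (v - G x) - (v' - G x') + (G x - G x') - η • mvec Q (x - xp)
        + η' • mvec Q (x' - x) := by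
    rw [mvec_sub, h1, h2]; abel
  have hnorm : ‖mvec Aᵀ (lamp - lam)‖ ≤
      ‖v - G x‖ + ‖v' - G x'‖ + L * ‖x' - x‖ + η * φmax * ‖x - xp‖
        + η' * φmax * ‖x' - x‖ := by
    rw [key]
    have h3 : ‖G x - G x'‖ ≤ L * ‖x' - x‖ := by
      simpa [norm_sub_rev x' x] using hG x x'
    have h4 : ‖η • mvec Q (x - xp)‖ ≤ η * φmax * ‖x - xp‖ := by
      rw [norm_smul, Real.norm_eq_abs, abs_of_pos hη, mul_assoc]
      exact mul_le_mul_of_nonneg_left (hQ _) hη.le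
    have h5 : ‖η' • mvec Q (x' - x)‖ ≤ η' * φmax * ‖x' - x‖ := by
      rw [norm_smul, Real.norm_eq_abs, abs_of_pos hη', mul_assoc]
      exact mul_le_mul_of_nonneg_left (hQ _) hη'.le
    calc ‖(v - G x) - (v' - G x') + (G x - G x') - η • mvec Q (x - xp)
          + η' • mvec Q (x' - x)‖
        ≤ ‖(v - G x) - (v' - G x') + (G x - G x') - η • mvec Q (x - xp)‖
          + ‖η' • mvec Q (x' - x)‖ := norm_add_le _ _
      _ ≤ ‖(v - G x) - (v' - G x') + (G x - G x')‖ + ‖η • mvec Q (x - xp)‖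
          + ‖η' • mvec Q (x' - x)‖ := by gcongr; exact norm_sub_le _ _
      _ ≤ ‖(v - G x) - (v' - G x')‖ + ‖G x - G x'‖ + ‖η • mvec Q (x - xp)‖
          + ‖η' • mvec Q (x' - x)‖ := by gcongr; exact norm_add_le _ _
      _ ≤ ‖v - G x‖ + ‖v' - G x'‖ + ‖G x - G x'‖ + ‖η • mvec Q (x - xp)‖
          + ‖η' • mvec Q (x' - x)‖ := by gcongr; exact norm_sub_le _ _
      _ ≤ _ := by gcongr
  have hA' := hA (lamp - lam)
  have hsq : ‖mvec Aᵀ (lamp - lam)‖ ^ 2 ≤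
      (‖v - G x‖ + ‖v' - G x'‖ + L * ‖x' - x‖ + η * φmax * ‖x - xp‖
        + η' * φmax * ‖x' - x‖) ^ 2 :=
    pow_le_pow_left₀ (norm_nonneg _) hnorm 2
  have h0 := norm_nonneg (v - G x)
  have h1' := norm_nonneg (v' - G x')
  have h2' := norm_nonneg (x - xp)
  have h3' := norm_nonneg (x' - x)
  have h5 := five_sq ‖v - G x‖ ‖v' - G x'‖ (L * ‖x' - x‖) (η * φmax * ‖x - xp‖)
    (η' * φmax * ‖x' - x‖)
  rw [div_mul_eq_mul_div, le_div_iff₀ hσA]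
  nlinarith [hA', hsq, h5]
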